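/- Suppose b : U × V → ℝ is a continuous bilinear form on Hilbert spaces satisfying the inf-sup condition inf_{u≠0} sup_{v≠0} |b(u,v)|/(‖u‖_U ‖v‖_V) ≥ α > 0 and the definiteness condition (b(u,v) = 0 for all u implies v = 0). Then for every continuous linear functional l on V there exists a unique u ∈ U with b(u,v) = l(v) for all v ∈ V, and ‖u‖_U ≤ (1/α) ‖l‖_{V*}. -/

import Mathlib

open RealInnerProductSpace

/-- Banach–Nečas–Babuška: a continuous bilinear form on Hilbert spaces
satisfying the inf-sup condition with constant `α > 0` and definiteness yields, for
each continuous linear functional `l` on `V`, a unique `u` with `b(u,·) = l` and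
`‖u‖ ≤ (1/α) ‖l‖`. -/
theorem stmt1
    {U V : Type*} [NormedAddCommGroup U] [InnerProductSpace ℝ U] [CompleteSpace U]
    [NormedAddCommGroup V] [InnerProductSpace ℝ V] [CompleteSpace V]
    (b : U →L[ℝ] V →L[ℝ] ℝ) (α : ℝ) (hα : 0 < α)
    (hinfsup : ∀ u : U, α * ‖u‖ ≤ ⨆ v : {v : V // v ≠ 0}, |b u v.1| / ‖v.1‖)
    (hdef : ∀ v : V, (∀ u : U, b u v = 0) → v = 0)
    (l : V →L[ℝ] ℝ) :
    ∃ u : U, (∀ v : V, b u v = l v) ∧ ‖u‖ ≤ (1 / α) * ‖l‖ ∧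
      ∀ u' : U, (∀ v : V, b u' v = l v) → u' = u := by
  by_cases hV : Subsingleton V
  · -- trivial case: V = 0, hence every u has norm 0
    have hz : ∀ u : U, u = 0 := by
      intro u
      have : IsEmpty {v : V // v ≠ 0} := ⟨fun v => v.2 (Subsingleton.elim _ _)⟩
      have h0 : (⨆ v : {v : V // v ≠ 0}, |b u v.1| / ‖v.1‖) = 0 :=
        Real.iSup_of_isEmpty _
      have h1 := hinfsup u
      rw [h0] at h1
      have hn : ‖u‖ ≤ 0 := by nlinarith [norm_nonneg u]
      exact norm_le_zero_iff.mp hn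
    refine ⟨0, ?_, ?_, ?_⟩
    · intro v
      have : v = (0 : V) := Subsingleton.elim _ _
      simp [this]
    · have : (0:ℝ) ≤ (1 / α) * ‖l‖ := by positivity
      simpa using this
    · intro u' _; exact hz u'
  · have : Nontrivial V := not_subsingleton_iff_nontrivial.mp hV
    haveI : Nonempty {v : V // v ≠ 0} := by
      obtain ⟨v, hv⟩ := exists_ne (0 : V)
      exact ⟨⟨v, hv⟩⟩
    set e := (InnerProductSpace.toDual ℝ V).symm with he
    set Blin : U →ₗ[ℝ] V :=
      { toFun := fun u => e (b u)
        map_add' := fun x y => by simp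
        map_smul' := fun c x => by
          simp [map_smulₛₗ, starRingEnd_apply, star_trivial] } with hBlin
    have hBnorm : ∀ u : U, ‖Blin u‖ = ‖b u‖ := fun u => e.norm_map (b u)
    set B : U →L[ℝ] V := Blin.mkContinuous ‖b‖ (fun u => by
      rw [hBnorm u]; exact b.le_opNorm u) with hB
    have hBe : ∀ u : U, B u = e (b u) := fun u => rfl
    have hBinner : ∀ (u : U) (v : V), ⟪B u, v⟫ = b u v := by
      intro u v
      rw [hBe]
      exact InnerProductSpace.toDual_symm_apply
    -- key lower bound
    have hlow : ∀ u : U, α * ‖u‖ ≤ ‖B u‖ := by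
      intro u
      refine le_trans (hinfsup u) (ciSup_le fun v => ?_)
      have hv : (0 : ℝ) < ‖v.1‖ := norm_pos_iff.mpr v.2
      rw [div_le_iff₀ hv]
      calc |b u v.1| = ‖(b u) v.1‖ := rfl
        _ ≤ ‖b u‖ * ‖v.1‖ := (b u).le_opNorm v.1
        _ = ‖B u‖ * ‖v.1‖ := by rw [hBe, e.norm_map]
    have hbound : ∀ u : U, ‖u‖ ≤ (⟨α⁻¹, by positivity⟩ : NNReal) * ‖B u‖ := by
      intro u
      have h1 := hlow u
      show ‖u‖ ≤ α⁻¹ * ‖B u‖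
      rw [← le_div_iff₀' hα] at h1
      simpa [div_eq_inv_mul] using h1
    have hanti : AntilipschitzWith _ B := B.antilipschitz_of_bound hbound
    have hclosed : IsClosed (Set.range B) := hanti.isClosed_range B.uniformContinuous
    have hrange : (LinearMap.range (B : U →ₗ[ℝ] V) : Submodule ℝ V) = ⊤ := by
      haveI : CompleteSpace (LinearMap.range (B : U →ₗ[ℝ] V) : Submodule ℝ V) := by
        have hcl : IsClosed ((LinearMap.range (B : U →ₗ[ℝ] V) : Submodule ℝ V) : Set V) := by
          rw [LinearMap.coe_range]; exact hclosed
        exact hcl.completeSpace_coe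
      rw [← Submodule.orthogonal_eq_bot_iff]
      rw [Submodule.eq_bot_iff]
      intro v hv
      refine hdef v fun u => ?_
      rw [← hBinner u v]
      exact hv (B u) (LinearMap.mem_range_self _ u)
    obtain ⟨u, hu⟩ : ∃ u : U, B u = e l := by
      have : e l ∈ (LinearMap.range (B : U →ₗ[ℝ] V) : Submodule ℝ V) := hrange ▸ Submodule.mem_top
      exact this
    have hsol : ∀ v : V, b u v = l v := by
      intro v
      rw [← hBinner u v, hu]
      exact InnerProductSpace.toDual_symm_apply
    refine ⟨u, hsol, ?_, ?_⟩
    · have h1 : α * ‖u‖ ≤ ‖B u‖ := hlow u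
      rw [hu, e.norm_map] at h1
      rw [← le_div_iff₀' hα] at h1
      simpa [one_div, div_eq_inv_mul] using h1
    · intro u' hu'
      have hb' : b u' = b u := ContinuousLinearMap.ext fun v => (hu' v).trans (hsol v).symm
      have hBu : B u' = B u := by rw [hBe, hBe, hb']
      exact hanti.injective hBu
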